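/- Let 𝔽 be a field, let k ≥ 1, let m₁,…,m_k be positive integers, and let T : [m₁] × ⋯ × [m_k] → 𝔽 be a k-tensor. For each i ∈ [k], let d_i be the matrix rank of the 2-flattening of T corresponding to the partition ({i}, [k] \ {i}). Then T has tensor rank at most d₁·d₂⋯d_{k−1}; that is, T can be written as a sum of d₁⋯d_{k−1} pure tensors. -/

import Mathlib

/-- The 2-flattening of a `k`-tensor `T` corresponding to the partition
`({i}, [k] \ {i})`: rows are indexed by `Fin (m i)`, columns by the remaining
partial indices. -/
def flattenSingle {𝔽 : Type*} {k : ℕ} {m : Fin k → ℕ}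
    (T : (∀ i, Fin (m i)) → 𝔽) (i : Fin k) :
    Matrix (Fin (m i)) ((j : {j : Fin k // j ≠ i}) → Fin (m j.1)) 𝔽 :=
  Matrix.of fun a g =>
    T fun j => if h : j = i then Fin.cast (congrArg m h).symm a else g ⟨j, h⟩

section Aux
variable {𝔽 : Type*} [Field 𝔽] {k : ℕ} {m : Fin k → ℕ}

noncomputable def colSp (T : (∀ i, Fin (m i)) → 𝔽) (i : Fin k) :
    Submodule 𝔽 (Fin (m i) → 𝔽) :=
  LinearMap.range (flattenSingle T i).mulVecLin

lemma col_mem (T : (∀ i, Fin (m i)) → 𝔽) (i : Fin k) (x : ∀ j, Fin (m j)) :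
    (fun a => T (Function.update x i a)) ∈ colSp T i := by
  refine ⟨Pi.single (fun j => x j.1) 1, ?_⟩
  funext a
  rw [Matrix.mulVecLin_apply]
  have : (flattenSingle T i).mulVec (Pi.single (fun j => x j.1) 1) a
      = flattenSingle T i a (fun j => x j.1) := by
    simp [Matrix.mulVec, dotProduct, Pi.single_apply]
  rw [this]
  show T _ = T _
  congr 1
  funext j
  by_cases h : j = i
  · subst h
    simp [Function.update]
  · simp [flattenSingle, h, Function.update_of_ne h]

variable {d : Fin k → ℕ} {V : ∀ i, Submodule 𝔽 (Fin (m i) → 𝔽)}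
  {u : ∀ i, Fin (d i) → Fin (m i) → 𝔽}
  {lf : ∀ i, Fin (d i) → ((Fin (m i) → 𝔽) →ₗ[𝔽] 𝔽)}

lemma step_decomp
    (hrep : ∀ i w, w ∈ V i → w = ∑ s, lf i s w • u i s)
    (i : Fin k) (T' : (∀ j, Fin (m j)) → 𝔽)
    (hT' : ∀ x, (fun a => T' (Function.update x i a)) ∈ V i)
    (x : ∀ j, Fin (m j)) :
    T' x = ∑ s, u i s (x i) * lf i s (fun a => T' (Function.update x i a)) := by
  classical
  have h := hrep i _ (hT' x)
  have h2 := congrFun h (x i)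
  have h3 : T' (Function.update x i (x i)) = T' x := by rw [Function.update_eq_self]
  rw [← h3, h2]
  simp [Finset.sum_apply, mul_comm]

lemma indep_of_updates (S : Finset (Fin k)) (f : (∀ i, Fin (m i)) → 𝔽)
    (hf : ∀ j ∈ S, ∀ x a, f (Function.update x j a) = f x) :
    ∀ x y, (∀ j, j ∉ S → x j = y j) → f x = f y := by
  classical
  revert hf
  induction S using Finset.induction_on with
  | empty =>
    intro _ x y hxy
    have : x = y := funext fun j => hxy j (by simp)
    rw [this]
  | @insert a S ha IH =>
    intro hf x y hxy
    have h1 : f x = f (Function.update x a (y a)) :=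
      (hf a (Finset.mem_insert_self a S) x (y a)).symm
    rw [h1]
    refine IH (fun j hj => hf j (Finset.mem_insert_of_mem hj)) _ _ fun j hj => ?_
    by_cases h : j = a
    · subst h; simp
    · rw [Function.update_of_ne h]
      exact hxy j (by simp [h, hj])

lemma main_ind
    (hrep : ∀ i w, w ∈ V i → w = ∑ s, lf i s w • u i s)
    (S : Finset (Fin k)) (T : (∀ i, Fin (m i)) → 𝔽)
    (hT : ∀ i x, (fun a => T (Function.update x i a)) ∈ V i) :
    ∃ (v : Fin (∏ i ∈ S, d i) → ∀ i, Fin (m i) → 𝔽)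
      (R : Fin (∏ i ∈ S, d i) → ((∀ i, Fin (m i)) → 𝔽)),
      (∀ p, ∀ j ∈ S, ∀ x a, R p (Function.update x j a) = R p x) ∧
      (∀ p, ∀ j ∉ S, ∀ x, (fun a => R p (Function.update x j a)) ∈ V j) ∧
      (∀ x, T x = ∑ p, (∏ i ∈ S, v p i (x i)) * R p x) := by
  classical
  induction S using Finset.induction_on with
  | empty =>
    exact ⟨fun _ _ _ => 1, fun _ => T, by simp, fun p j _ => hT j,
      by intro x; rw [Finset.sum_const, Finset.card_univ, Fintype.card_fin]; simp⟩
  | @insert a S ha IH =>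
    obtain ⟨v, R, hinv, hPp, hsum⟩ := IH
    have hprod : ∏ i ∈ insert a S, d i = d a * ∏ i ∈ S, d i := Finset.prod_insert ha
    let e : Fin (d a) × Fin (∏ i ∈ S, d i) ≃ Fin (∏ i ∈ insert a S, d i) :=
      finProdFinEquiv.trans (finCongr hprod.symm)
    refine ⟨fun q => Function.update (fun i => v (e.symm q).2 i) a (u a (e.symm q).1),
            fun q x => lf a (e.symm q).1 (fun b => R (e.symm q).2 (Function.update x a b)),
            ?_, ?_, ?_⟩
    · intro q j hj x c
      rcases Finset.mem_insert.mp hj with h | h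
      · subst h
        have hfun : (fun b => R (e.symm q).2 (Function.update (Function.update x j c) j b))
            = fun b => R (e.symm q).2 (Function.update x j b) :=
          funext fun b => by rw [Function.update_idem]
        dsimp only
        rw [hfun]
      · have hja : j ≠ a := fun hh => ha (hh ▸ h)
        have hfun : (fun b => R (e.symm q).2 (Function.update (Function.update x j c) a b))
            = fun b => R (e.symm q).2 (Function.update x a b) :=
          funext fun b => by rw [Function.update_comm hja, hinv (e.symm q).2 j h]
        dsimp only
        rw [hfun]
    · intro q j hj x
      have hja : j ≠ a := fun hh => hj (hh ▸ Finset.mem_insert_self a S)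
      have hjS : j ∉ S := fun hh => hj (Finset.mem_insert_of_mem hh)
      have hcol : (fun c => lf a (e.symm q).1
            (fun b => R (e.symm q).2 (Function.update (Function.update x j c) a b)))
          = ∑ b, lf a (e.symm q).1 (fun b' => if b = b' then 1 else 0) •
              (fun c => R (e.symm q).2 (Function.update (Function.update x a b) j c)) := by
        funext c
        rw [LinearMap.pi_apply_eq_sum_univ]
        simp only [Finset.sum_apply, Pi.smul_apply, smul_eq_mul]
        refine Finset.sum_congr rfl fun b _ => ?_
        rw [Function.update_comm hja.symm]
        ring
      rw [hcol]
      exact Submodule.sum_mem _ fun b _ =>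
        Submodule.smul_mem _ _ (hPp (e.symm q).2 j hjS (Function.update x a b))
    · intro x
      rw [hsum x]
      conv_rhs => rw [← Equiv.sum_comp e]
      rw [Fintype.sum_prod_type, Finset.sum_comm]
      refine Finset.sum_congr rfl fun p _ => ?_
      rw [step_decomp hrep a (R p) (fun y => hPp p a ha y) x, Finset.mul_sum]
      refine Finset.sum_congr rfl fun t _ => ?_
      simp only [Equiv.symm_apply_apply]
      rw [Finset.prod_insert ha, Function.update_self]
      have h2 : ∏ i ∈ S,
            Function.update (fun i => v p i) a (u a t) i (x i)
          = ∏ i ∈ S, v p i (x i) :=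
        Finset.prod_congr rfl fun i hi => by
          rw [Function.update_of_ne (by rintro rfl; exact ha hi)]
      rw [h2]
      ring

end Aux


/-- If `d i` is the rank of the 2-flattening of `T` corresponding
to the partition `({i}, [k] \ {i})`, then `T` can be written as a sum of
`d₁ ⋯ d_{k-1}` pure tensors (the product over all indices but the last one). -/
theorem stmt_1 (𝔽 : Type*) [Field 𝔽] (k : ℕ) (hk : 1 ≤ k)
    (m : Fin k → ℕ) (hm : ∀ i, 0 < m i)
    (T : (∀ i, Fin (m i)) → 𝔽) (d : Fin k → ℕ)
    (hd : ∀ i, (flattenSingle T i).rank = d i) :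
    ∃ v : Fin (∏ i ∈ Finset.univ.erase (⟨k - 1, by omega⟩ : Fin k), d i) →
        ∀ i, Fin (m i) → 𝔽,
      ∀ x, T x = ∑ p, ∏ i, v p i (x i) := by
  classical
  have hklt : k - 1 < k := by omega
  let last : Fin k := ⟨k - 1, hklt⟩
  have hfin : ∀ i, Module.finrank 𝔽 (colSp T i) = d i := fun i => hd i
  let b : ∀ i, Module.Basis (Fin (d i)) 𝔽 (colSp T i) :=
    fun i => Module.finBasisOfFinrankEq 𝔽 _ (hfin i)
  choose W hW using fun i => Submodule.exists_isCompl (colSp T i)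
  let lf : ∀ i, Fin (d i) → ((Fin (m i) → 𝔽) →ₗ[𝔽] 𝔽) := fun i s =>
    (Finsupp.lapply s).comp (((b i).repr.toLinearMap).comp
      ((colSp T i).linearProjOfIsCompl (W i) (hW i)))
  let u : ∀ i, Fin (d i) → Fin (m i) → 𝔽 := fun i s => ((b i) s : Fin (m i) → 𝔽)
  have hrep : ∀ i w, w ∈ colSp T i → w = ∑ s, lf i s w • u i s := by
    intro i w hw
    have h1 : (colSp T i).linearProjOfIsCompl (W i) (hW i) w = ⟨w, hw⟩ :=
      Submodule.linearProjOfIsCompl_apply_left (hW i) ⟨w, hw⟩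
    have h2 := (b i).sum_repr ⟨w, hw⟩
    calc w = ((⟨w, hw⟩ : colSp T i) : Fin (m i) → 𝔽) := rfl
    _ = ((∑ s, (b i).repr ⟨w, hw⟩ s • (b i) s : colSp T i) : Fin (m i) → 𝔽) := by
      rw [h2]
    _ = ∑ s, lf i s w • u i s := by
      simp only [Submodule.coe_sum, Submodule.coe_smul]
      simp [lf, u, h1]
  obtain ⟨v, R, hinv, hPp, hsum⟩ :=
    main_ind (V := colSp T) (u := u) (lf := lf) hrep
      (Finset.univ.erase last) T (fun i x => col_mem T i x)
  let x₀ : ∀ i, Fin (m i) := fun i => ⟨0, hm i⟩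
  refine ⟨fun p => Function.update (fun i => v p i) last
      (fun y => R p (Function.update x₀ last y)), ?_⟩
  show ∀ x, T x = ∑ p : Fin (∏ i ∈ Finset.univ.erase last, d i),
      ∏ i, Function.update (fun i => v p i) last
        (fun y => R p (Function.update x₀ last y)) i (x i)
  intro x
  rw [hsum x]
  refine Finset.sum_congr rfl fun p _ => ?_
  rw [← Finset.prod_erase_mul Finset.univ
    (fun i => Function.update (fun i => v p i) last
      (fun y => R p (Function.update x₀ last y)) i (x i)) (Finset.mem_univ last)]
  have hprod : ∏ i ∈ Finset.univ.erase last,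
        Function.update (fun i => v p i) last
          (fun y => R p (Function.update x₀ last y)) i (x i)
      = ∏ i ∈ Finset.univ.erase last, v p i (x i) :=
    Finset.prod_congr rfl fun i hi => by
      rw [Function.update_of_ne (Finset.ne_of_mem_erase hi)]
  rw [hprod, Function.update_self]
  have hR : R p x = R p (Function.update x₀ last (x last)) := by
    refine indep_of_updates _ (R p) (hinv p) x _ fun j hj => ?_
    have hjl : j = last := by
      by_contra hne
      exact hj (Finset.mem_erase.mpr ⟨hne, Finset.mem_univ j⟩)
    subst hjl
    rw [Function.update_self]
  rw [← hR]
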